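/- Exact minimization of I(Y;W|U) for the selection function (computation in Example 1). Let a ≥ 2 and b ≥ 1 be natural numbers. Let X be uniform over {1,…,a}, let Y = (Y_1,…,Y_a) where the Y_j are i.i.d. uniform over {1,…,2^b} and independent of X, and let f(x,(y_1,…,y_a)) = (x, y_x). Let U be a finite-valued random variable jointly distributed with X and conditionally independent of Y given X, and for u in the range of U set 𝒜_u = {x : P(U=u, X=x) > 0}. Then, over all finite-valued random variables W jointly distributed with (X,U,Y) such that X−(U,Y)−W is a Markov chain and (U,Y) ∈ W ∈ Γ(G_{U,Y|X,U}(f)), the minimum of I(Y;W|U) equals b · Σ_u |𝒜_u| · P(U=u) bits. -/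

import Mathlib

open scoped BigOperators Classical

section Preliminaries

variable {Ω : Type*} [Fintype Ω]

/-- The probability mass function of the random variable `X : Ω → α` under the
weight function `μ` on the finite sample space `Ω`. -/
noncomputable def pm {α : Type*} (μ : Ω → ℝ) (X : Ω → α) (a : α) : ℝ :=
  ∑ ω, if X ω = a then μ ω else 0

/-- `μ` is a probability mass function on the finite sample space `Ω`. -/
def IsPMF (μ : Ω → ℝ) : Prop := (∀ ω, 0 ≤ μ ω) ∧ ∑ ω, μ ω = 1

/-- Shannon entropy (in bits) of the random variable `X` under `μ`. -/
noncomputable def ent {α : Type*} [Fintype α] (μ : Ω → ℝ) (X : Ω → α) : ℝ :=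
  - ∑ a, pm μ X a * Real.logb 2 (pm μ X a)

/-- Conditional Shannon entropy H(X|Y) (in bits). -/
noncomputable def condEnt {α β : Type*} [Fintype α] [Fintype β] (μ : Ω → ℝ)
    (X : Ω → α) (Y : Ω → β) : ℝ :=
  ent μ (fun ω => (X ω, Y ω)) - ent μ Y

/-- Mutual information I(X;Y) (in bits). -/
noncomputable def mi {α β : Type*} [Fintype α] [Fintype β] (μ : Ω → ℝ)
    (X : Ω → α) (Y : Ω → β) : ℝ :=
  ent μ X + ent μ Y - ent μ (fun ω => (X ω, Y ω))

/-- Conditional mutual information I(X;Y|Z) (in bits). -/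
noncomputable def condMI {α β γ : Type*} [Fintype α] [Fintype β] [Fintype γ] (μ : Ω → ℝ)
    (X : Ω → α) (Y : Ω → β) (Z : Ω → γ) : ℝ :=
  condEnt μ X Z - condEnt μ X (fun ω => (Y ω, Z ω))

/-- `A` and `C` are conditionally independent given `B`
(the Markov chain A − B − C). -/
def CondIndepRV {α β γ : Type*} (μ : Ω → ℝ) (A : Ω → α) (B : Ω → β) (C : Ω → γ) : Prop :=
  ∀ a b c, pm μ (fun ω => (A ω, B ω, C ω)) (a, b, c) * pm μ B b
    = pm μ (fun ω => (A ω, B ω)) (a, b) * pm μ (fun ω => (B ω, C ω)) (b, c)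

/-- The conditional characteristic graph `G_{L|K}(f)` of `L` given `K`, with respect to
the source variable `S` and the function `f`: vertices `l₁ ≠ l₂` are adjacent iff there
are `k, s₁, s₂` with `p(l₁,k,s₁) ⬝ p(l₂,k,s₂) > 0` and `f s₁ ≠ f s₂`. -/
def charGraph {α β σ γ : Type*} (μ : Ω → ℝ) (L : Ω → α) (K : Ω → β) (S : Ω → σ)
    (f : σ → γ) : SimpleGraph α where
  Adj l₁ l₂ := l₁ ≠ l₂ ∧ ∃ k s₁ s₂,
    0 < pm μ (fun ω => (L ω, K ω, S ω)) (l₁, k, s₁) ∧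
    0 < pm μ (fun ω => (L ω, K ω, S ω)) (l₂, k, s₂) ∧ f s₁ ≠ f s₂
  symm := by
    constructor
    rintro l₁ l₂ ⟨h, k, s₁, s₂, h1, h2, hf⟩
    exact ⟨h.symm, k, s₂, s₁, h2, h1, hf.symm⟩
  loopless := by constructor; rintro l ⟨h, -⟩; exact h rfl

/-- A finite set of vertices is an independent set of the graph `G`. -/
def IsIndepSet {α : Type*} (G : SimpleGraph α) (s : Finset α) : Prop :=
  ∀ a ∈ s, ∀ b ∈ s, ¬ G.Adj a b

end Preliminaries

section Tools


noncomputable def F2 (t : ℝ) : ℝ := -(t * Real.logb 2 t)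

@[simp] lemma F2_zero : F2 0 = 0 := by simp [F2]

lemma F2_eq (x : ℝ) : F2 x = Real.negMulLog x / Real.log 2 := by
  rw [F2, Real.negMulLog, Real.logb]; ring

lemma F2_mul_inv (p : ℝ) {N : ℝ} (hN : 0 < N) :
    F2 (p * N⁻¹) = N⁻¹ * (F2 p + p * Real.logb 2 N) := by
  rcases eq_or_ne p 0 with rfl | hp
  · simp
  · rw [F2, F2, Real.logb_mul hp (inv_ne_zero hN.ne'), Real.logb_inv]; ring

variable {Ω : Type*} [Fintype Ω] {μ : Ω → ℝ}

lemma ent_eq {α : Type*} [Fintype α] (X : Ω → α) :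
    ent μ X = ∑ a, F2 (pm μ X a) := by
  rw [ent, ← Finset.sum_neg_distrib]; rfl

lemma pm_nonneg (h0 : ∀ ω, 0 ≤ μ ω) {α : Type*} (X : Ω → α) (a : α) : 0 ≤ pm μ X a :=
  Finset.sum_nonneg fun ω _ => by split <;> simp [h0 ω]

lemma exists_of_pm_ne_zero {α : Type*} {X : Ω → α} {a : α} (h : pm μ X a ≠ 0) :
    ∃ ω, μ ω ≠ 0 ∧ X ω = a := by
  by_contra hc
  push_neg at hc
  apply h
  refine Finset.sum_eq_zero fun ω _ => ?_
  split
  · next hω => by_contra h'; exact h' (hc ω (by tauto) hω).elim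
  · rfl

lemma pm_pos (h0 : ∀ ω, 0 ≤ μ ω) {α : Type*} {X : Ω → α} {a : α}
    (h : ∃ ω, μ ω ≠ 0 ∧ X ω = a) : 0 < pm μ X a := by
  obtain ⟨ω, hω, hX⟩ := h
  refine Finset.sum_pos' (fun ω' _ => by split <;> simp [h0 ω']) ⟨ω, Finset.mem_univ ω, ?_⟩
  rw [if_pos hX]
  exact lt_of_le_of_ne (h0 ω) (Ne.symm hω)

lemma pm_congr {α β : Type*} {X : Ω → α} {X' : Ω → β} {a : α} {a' : β}
    (h : ∀ ω, μ ω ≠ 0 → (X ω = a ↔ X' ω = a')) : pm μ X a = pm μ X' a' := by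
  refine Finset.sum_congr rfl fun ω _ => ?_
  by_cases hω : μ ω = 0
  · split <;> split <;> simp [hω]
  · rw [if_congr (h ω hω) rfl rfl]

lemma sum_pm {α : Type*} [Fintype α] (X : Ω → α) : ∑ a, pm μ X a = ∑ ω, μ ω := by
  unfold pm
  rw [Finset.sum_comm]
  exact Finset.sum_congr rfl fun ω _ => by simp

lemma pm_marg {α β : Type*} [Fintype β] (f : Ω → α) (g : Ω → β) (a : α) :
    ∑ b, pm μ (fun ω => (f ω, g ω)) (a, b) = pm μ f a := by
  unfold pm
  rw [Finset.sum_comm]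
  refine Finset.sum_congr rfl fun ω _ => ?_
  by_cases h : f ω = a <;> simp [Prod.ext_iff, h]

lemma ent_congr {α : Type*} [Fintype α] {X X' : Ω → α}
    (h : ∀ ω, μ ω ≠ 0 → X ω = X' ω) : ent μ X = ent μ X' := by
  rw [ent_eq, ent_eq]
  exact Finset.sum_congr rfl fun a _ => by
    rw [pm_congr (fun ω hω => by rw [h ω hω])]

lemma ent_two_sided {α β : Type*} [Fintype α] [Fintype β] {Z : Ω → α} {Z' : Ω → β}
    (g : α → β) (h : β → α)
    (h1 : ∀ ω, μ ω ≠ 0 → Z' ω = g (Z ω))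
    (h2 : ∀ ω, μ ω ≠ 0 → h (Z' ω) = Z ω) :
    ent μ Z' = ent μ Z := by
  rw [ent_eq, ent_eq]
  rw [← Finset.sum_filter_of_ne (p := fun b => pm μ Z' b ≠ 0)
      (fun b _ hb => fun hz => hb (by rw [hz]; simp)),
    ← Finset.sum_filter_of_ne (p := fun a => pm μ Z a ≠ 0)
      (fun a _ ha => fun hz => ha (by rw [hz]; simp))]
  have key : ∀ a, pm μ Z a ≠ 0 → pm μ Z' (g a) = pm μ Z a ∧ h (g a) = a := by
    intro a ha
    obtain ⟨ω₀, hω₀, hZ⟩ := exists_of_pm_ne_zero ha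
    have hga : h (g a) = a := by rw [← hZ, ← h1 ω₀ hω₀, h2 ω₀ hω₀]
    refine ⟨pm_congr fun ω hω => ?_, hga⟩
    constructor
    · intro hz'; rw [← hga, ← hz', h2 ω hω]
    · intro hz; rw [h1 ω hω, hz]
  have key' : ∀ b, pm μ Z' b ≠ 0 → pm μ Z (h b) = pm μ Z' b ∧ g (h b) = b := by
    intro b hb
    obtain ⟨ω₁, hω₁, hZ'⟩ := exists_of_pm_ne_zero hb
    have hhb : h b = Z ω₁ := by rw [← hZ', h2 ω₁ hω₁]
    have hgb : g (h b) = b := by rw [hhb, ← h1 ω₁ hω₁, hZ']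
    refine ⟨pm_congr fun ω hω => ?_, hgb⟩
    constructor
    · intro hz'; rw [h1 ω hω, hz', hgb]
    · intro hz; rw [← hz, h2 ω hω]
  refine Finset.sum_nbij' (i := h) (j := g) ?_ ?_ ?_ ?_ ?_
  · intro b hb
    simp only [Finset.mem_filter, Finset.mem_univ, true_and] at hb ⊢
    rw [(key' b hb).1]; exact hb
  · intro a ha
    simp only [Finset.mem_filter, Finset.mem_univ, true_and] at ha ⊢
    rw [(key a ha).1]; exact ha
  · intro b hb
    simp only [Finset.mem_filter, Finset.mem_univ, true_and] at hb
    exact (key' b hb).2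
  · intro a ha
    simp only [Finset.mem_filter, Finset.mem_univ, true_and] at ha
    exact (key a ha).2
  · intro b hb
    simp only [Finset.mem_filter, Finset.mem_univ, true_and] at hb
    rw [(key' b hb).1]

lemma sum_F2_le {ι : Type*} {t : Finset ι} (ht : t.Nonempty) {q : ι → ℝ}
    (hq : ∀ i ∈ t, 0 ≤ q i) :
    ∑ i ∈ t, F2 (q i) ≤ F2 (∑ i ∈ t, q i) + (∑ i ∈ t, q i) * Real.logb 2 t.card := by
  set c : ℝ := (t.card : ℝ) with hc
  have hN : (0:ℝ) < c := by rw [hc]; exact_mod_cast Finset.card_pos.2 ht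
  set s : ℝ := ∑ i ∈ t, q i with hs
  have hJ := Real.concaveOn_negMulLog.le_map_sum (t := t) (w := fun _ => c⁻¹)
      (p := q) (fun i _ => by positivity)
      (by rw [Finset.sum_const, nsmul_eq_mul, ← hc, mul_inv_cancel₀ hN.ne'])
      (fun i hi => hq i hi)
  simp only [smul_eq_mul, ← Finset.mul_sum] at hJ
  have hR : Real.negMulLog (c⁻¹ * s) = c⁻¹ * (Real.negMulLog s + s * Real.log c) := by
    rw [mul_comm, Real.negMulLog_mul]
    simp only [Real.negMulLog, Real.log_inv]
    ring
  rw [hR] at hJ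
  have key : ∑ i ∈ t, Real.negMulLog (q i) ≤ Real.negMulLog s + s * Real.log c :=
    (mul_le_mul_iff_right₀ (inv_pos.2 hN)).1 hJ
  have hlog2 : (0:ℝ) < Real.log 2 := Real.log_pos (by norm_num)
  calc ∑ i ∈ t, F2 (q i) = (∑ i ∈ t, Real.negMulLog (q i)) / Real.log 2 := by
        rw [Finset.sum_div]; exact Finset.sum_congr rfl fun i _ => F2_eq _
    _ ≤ (Real.negMulLog s + s * Real.log c) / Real.log 2 := by
        gcongr
    _ = F2 s + s * Real.logb 2 c := by rw [F2_eq, Real.logb]; ring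

lemma ent_pair_scaled {α β : Type*} [Fintype α] [Fintype β]
    (Z : Ω → α) (V : Ω → β) (hcard : 0 < Fintype.card α)
    (hsum : ∑ b, pm μ V b = 1)
    (hjoint : ∀ p : α × β, pm μ (fun ω => (Z ω, V ω)) p
      = pm μ V p.2 * ((Fintype.card α : ℝ))⁻¹) :
    ent μ (fun ω => (Z ω, V ω)) = ent μ V + Real.logb 2 (Fintype.card α) := by
  have hN : (0:ℝ) < (Fintype.card α : ℝ) := by exact_mod_cast hcard
  rw [ent_eq, ent_eq]
  set L := Real.logb 2 (Fintype.card α : ℝ) with hL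
  calc ∑ p : α × β, F2 (pm μ (fun ω => (Z ω, V ω)) p)
      = ∑ p : α × β, (Fintype.card α : ℝ)⁻¹ * (F2 (pm μ V p.2) + pm μ V p.2 * L) := by
        exact Finset.sum_congr rfl fun p _ => by rw [hjoint p, F2_mul_inv _ hN]
    _ = ∑ _a : α, ∑ b : β, (Fintype.card α : ℝ)⁻¹ * (F2 (pm μ V b) + pm μ V b * L) := by
        rw [Fintype.sum_prod_type]
    _ = ∑ _a : α, (Fintype.card α : ℝ)⁻¹ * ((∑ b, F2 (pm μ V b)) + L) := by
        refine Finset.sum_congr rfl fun a _ => ?_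
        rw [← Finset.mul_sum, Finset.sum_add_distrib, ← Finset.sum_mul, hsum, one_mul]
    _ = (∑ b, F2 (pm μ V b)) + L := by
        rw [Finset.sum_const, Finset.card_univ, nsmul_eq_mul]
        field_simp

lemma card_agree {n : ℕ} {κ : Type*} [Fintype κ] (s : Finset (Fin n)) (y0 : Fin n → κ)
    [DecidablePred fun y : Fin n → κ => ∀ x ∈ s, y x = y0 x] :
    (Finset.univ.filter fun y : Fin n → κ => ∀ x ∈ s, y x = y0 x).card
      = Fintype.card κ ^ (n - s.card) := by
  classical
  rw [← Fintype.card_subtype]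
  have e : {y : Fin n → κ // ∀ x ∈ s, y x = y0 x} ≃ ((sᶜ : Finset (Fin n)) → κ) := by
    refine ⟨fun y x => y.1 x.1,
      fun z => ⟨fun x => if hx : x ∈ s then y0 x else z ⟨x, Finset.mem_compl.2 hx⟩,
        fun x hx => dif_pos hx⟩, ?_, ?_⟩
    · intro y
      apply Subtype.ext
      funext x
      dsimp only
      split_ifs with hx
      · exact (y.2 x hx).symm
      · rfl
    · intro z
      funext x
      dsimp only
      rw [dif_neg (Finset.mem_compl.1 x.2)]
  rw [Fintype.card_congr e, Fintype.card_fun, Fintype.card_coe, Finset.card_compl,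
    Fintype.card_fin]

lemma pm_marg_fst {α β : Type*} [Fintype α] (f : Ω → α) (g : Ω → β) (bb : β) :
    ∑ a, pm μ (fun ω => (f ω, g ω)) (a, bb) = pm μ g bb := by
  unfold pm
  rw [Finset.sum_comm]
  refine Finset.sum_congr rfl fun ω _ => ?_
  by_cases h : g ω = bb <;> simp [Prod.ext_iff, h]

lemma pm_eq_zero_of {α : Type*} {X : Ω → α} {aa : α}
    (h : ∀ ω, μ ω ≠ 0 → X ω ≠ aa) : pm μ X aa = 0 := by
  by_contra hc
  obtain ⟨ω, hω, hX⟩ := exists_of_pm_ne_zero hc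
  exact h ω hω hX

lemma pm_eq_single {α : Type*} {X : Ω → α} {aa : α} (ω₀ : Ω)
    (h : ∀ ω, μ ω ≠ 0 → (X ω = aa ↔ ω = ω₀)) (hX : X ω₀ = aa) : pm μ X aa = μ ω₀ := by
  unfold pm
  rw [Fintype.sum_eq_single ω₀]
  · rw [if_pos hX]
  · intro ω hne
    by_cases hω : μ ω = 0
    · split <;> simp [hω]
    · rw [if_neg]
      intro hXa
      exact hne ((h ω hω).1 hXa)

lemma charGraph_adj {α β σ γ : Type*} {μ : Ω → ℝ} {L : Ω → α} {K : Ω → β} {S : Ω → σ}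
    {f : σ → γ} {l₁ l₂ : α} :
    (charGraph μ L K S f).Adj l₁ l₂ ↔ l₁ ≠ l₂ ∧ ∃ k s₁ s₂,
      0 < pm μ (fun ω => (L ω, K ω, S ω)) (l₁, k, s₁) ∧
      0 < pm μ (fun ω => (L ω, K ω, S ω)) (l₂, k, s₂) ∧ f s₁ ≠ f s₂ := Iff.rfl

end Tools


/-- **Computation in Example 1.** Let `X` be uniform over `{1,…,a}`, `Y = (Y_1,…,Y_a)`
with the `Y_j` i.i.d. uniform over `{1,…,2^b}` and independent of `X`, and
`f(x,y) = (x, y_x)`. Let `U` be jointly distributed with `X`, conditionally independent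
of `Y` given `X`, and let `𝒜_u = {x : P(U = u, X = x) > 0}`. Then the minimum of
`I(Y;W|U)` over all `W` jointly distributed with `(X,U,Y)` such that `X − (U,Y) − W`
is a Markov chain and `(U,Y) ∈ W ∈ Γ(G_{U,Y|X,U}(f))` equals
`b · Σ_u |𝒜_u| · P(U = u)` bits. A joint distribution of `(X,U,Y,W)` is encoded by a
pmf `ν` on the canonical space `Fin a × 𝒰 × (Fin a → Fin (2^b)) × Finset (𝒰 × (Fin a → Fin (2^b)))`. -/
theorem example_min_conditional_mutual_information
    {Ω 𝒰 : Type*} [Fintype Ω] [Fintype 𝒰]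
    (a b : ℕ) (ha : 2 ≤ a) (hb : 1 ≤ b)
    (μ : Ω → ℝ) (hμ : IsPMF μ)
    (X : Ω → Fin a) (Y : Ω → (Fin a → Fin (2 ^ b))) (U : Ω → 𝒰)
    -- (X, Y) is uniform: X uniform, Y i.i.d. uniform independent of X
    (huniform : ∀ x y, pm μ (fun ω => (X ω, Y ω)) (x, y)
      = ((a : ℝ) * ((2 : ℝ) ^ b) ^ (a : ℕ))⁻¹)
    -- Markov chain U − X − Y
    (hMarkov : CondIndepRV μ U X Y) :
    IsLeast
      { r : ℝ |
        ∃ ν : Fin a × 𝒰 × (Fin a → Fin (2 ^ b))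
              × Finset (𝒰 × (Fin a → Fin (2 ^ b))) → ℝ,
          IsPMF ν ∧
          -- the marginal of (X,U,Y) under ν matches its distribution under μ
          (∀ x u y, pm ν (fun ω' => (ω'.1, ω'.2.1, ω'.2.2.1)) (x, u, y)
            = pm μ (fun ω => (X ω, U ω, Y ω)) (x, u, y)) ∧
          -- Markov chain X − (U,Y) − W
          CondIndepRV ν (fun ω' => ω'.1) (fun ω' => (ω'.2.1, ω'.2.2.1))
            (fun ω' => ω'.2.2.2) ∧
          -- (U,Y) ∈ W ∈ Γ(G_{U,Y | X,U}(f))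
          (∀ ω', 0 < ν ω' → (ω'.2.1, ω'.2.2.1) ∈ ω'.2.2.2 ∧
            IsIndepSet (charGraph μ (fun ω => (U ω, Y ω)) (fun ω => (X ω, U ω))
              (fun ω => (X ω, Y ω))
              (fun s : Fin a × (Fin a → Fin (2 ^ b)) => (s.1, s.2 s.1))) ω'.2.2.2) ∧
          r = condMI ν (fun ω' => ω'.2.2.1) (fun ω' => ω'.2.2.2) (fun ω' => ω'.2.1) }
      ((b : ℝ) * ∑ u : 𝒰,
        ((Finset.univ.filter fun x => 0 < pm μ (fun ω => (U ω, X ω)) (u, x)).card : ℝ)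
          * pm μ U u) := by
  classical
  obtain ⟨hμ0, hμ1⟩ := hμ
  have ha' : (a:ℝ) ≠ 0 := by positivity
  set R : ℝ := ((2:ℝ) ^ b) ^ a with hR
  have hR0 : (0:ℝ) < R := by rw [hR]; positivity
  -- basic distribution facts
  have hcardYt : ((Fintype.card (Fin a → Fin (2^b)) : ℕ) : ℝ) = R := by
    rw [Fintype.card_fun, Fintype.card_fin, Fintype.card_fin, hR]
    push_cast
    rfl
  have hX : ∀ x, pm μ X x = (a:ℝ)⁻¹ := by
    intro x
    rw [← pm_marg (μ := μ) X Y x]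
    rw [Finset.sum_congr rfl fun y _ => huniform x y, Finset.sum_const, Finset.card_univ,
      nsmul_eq_mul, hcardYt]
    rw [hR]
    field_simp
  have hUXY : ∀ u x y, pm μ (fun ω => (U ω, X ω, Y ω)) (u, x, y)
      = pm μ (fun ω => (U ω, X ω)) (u, x) * R⁻¹ := by
    intro u x y
    have h := hMarkov u x y
    rw [hX x, huniform x y] at h
    field_simp at h ⊢
    have h3 : (pm μ (fun ω => (U ω, X ω, Y ω)) (u, x, y) * R) * (a:ℝ)
        = pm μ (fun ω => (U ω, X ω)) (u, x) * (a:ℝ) := by linear_combination (a:ℝ) * h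
    exact mul_right_cancel₀ ha' h3
  have hq3 : ∀ x u y, pm μ (fun ω => (X ω, U ω, Y ω)) (x, u, y)
      = pm μ (fun ω => (U ω, X ω)) (u, x) * R⁻¹ := by
    intro x u y
    rw [show pm μ (fun ω => (X ω, U ω, Y ω)) (x, u, y)
        = pm μ (fun ω => (U ω, X ω, Y ω)) (u, x, y) from
      pm_congr fun ω _ => by simp only [Prod.mk.injEq]; tauto]
    exact hUXY u x y
  have hsumU : ∑ u, pm μ U u = 1 := (sum_pm U).trans hμ1
  set Au : 𝒰 → Finset (Fin a) :=
    fun u => Finset.univ.filter fun x => 0 < pm μ (fun ω => (U ω, X ω)) (u, x) with hAu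
  have hgoalAu : ∀ u : 𝒰,
      (Finset.univ.filter fun x => 0 < pm μ (fun ω => (U ω, X ω)) (u, x)) = Au u :=
    fun u => by rw [hAu]
  have hmemAu : ∀ u x, x ∈ Au u ↔ 0 < pm μ (fun ω => (U ω, X ω)) (u, x) := by
    intro u x
    rw [hAu]
    simp
  have kcard : ∀ u, (Au u).card ≤ a := fun u => by
    simpa using Finset.card_le_univ (Au u)
  have hAu_zero : ∀ u x, x ∉ Au u → pm μ (fun ω => (U ω, X ω)) (u, x) = 0 := by
    intro u x hx
    rcases lt_or_eq_of_le (pm_nonneg hμ0 (fun ω => (U ω, X ω)) (u, x)) with h | h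
    · exact absurd ((hmemAu u x).2 h) hx
    · exact h.symm
  have hsUY : ∀ u y, ∑ x, pm μ (fun ω => (X ω, U ω, Y ω)) (x, u, y) = pm μ U u * R⁻¹ := by
    intro u y
    rw [Finset.sum_congr rfl fun x _ => hq3 x u y, ← Finset.sum_mul, pm_marg U X u]
  set G := charGraph μ (fun ω => (U ω, Y ω)) (fun ω => (X ω, U ω)) (fun ω => (X ω, Y ω))
      (fun s : Fin a × (Fin a → Fin (2 ^ b)) => (s.1, s.2 s.1)) with hG
  have hAdj_intro : ∀ (u : 𝒰) (y₁ y₂ : Fin a → Fin (2^b)) (x : Fin a), x ∈ Au u →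
      y₁ x ≠ y₂ x → G.Adj (u, y₁) (u, y₂) := by
    intro u y₁ y₂ x hx hne
    rw [hG, charGraph_adj]
    have hv : ∀ y : Fin a → Fin (2^b),
        pm μ (fun ω => ((U ω, Y ω), (X ω, U ω), (X ω, Y ω))) ((u, y), (x, u), (x, y))
          = pm μ (fun ω => (U ω, X ω, Y ω)) (u, x, y) :=
      fun y => pm_congr fun ω _ => by simp only [Prod.mk.injEq]; tauto
    have hpos : ∀ y : Fin a → Fin (2^b),
        0 < pm μ (fun ω => ((U ω, Y ω), (X ω, U ω), (X ω, Y ω))) ((u, y), (x, u), (x, y)) := by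
      intro y
      rw [hv, hUXY]
      exact mul_pos ((hmemAu u x).1 hx) (inv_pos.2 hR0)
    refine ⟨fun h => hne (congrFun (congrArg Prod.snd h) x), (x, u), (x, y₁), (x, y₂),
      hpos y₁, hpos y₂, fun h => hne ?_⟩
    simpa using congrArg Prod.snd h
  have hagree : ∀ (w : Finset (𝒰 × (Fin a → Fin (2^b)))), IsIndepSet G w →
      ∀ u y₁ y₂, (u, y₁) ∈ w → (u, y₂) ∈ w → ∀ x ∈ Au u, y₁ x = y₂ x := by
    intro w hw u y₁ y₂ h1 h2 x hx
    by_contra hne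
    exact hw _ h1 _ h2 (hAdj_intro u y₁ y₂ x hx hne)
  -- common marginal consequences for any ν matching the (X,U,Y) marginal
  have hcommon : ∀ (ν : Fin a × 𝒰 × (Fin a → Fin (2^b))
        × Finset (𝒰 × (Fin a → Fin (2^b))) → ℝ),
      (∀ x u y, pm ν (fun ω' => (ω'.1, ω'.2.1, ω'.2.2.1)) (x, u, y)
        = pm μ (fun ω => (X ω, U ω, Y ω)) (x, u, y)) →
      (∀ y u, pm ν (fun ω' => (ω'.2.2.1, ω'.2.1)) (y, u) = pm μ U u * R⁻¹) ∧
      (∀ u, pm ν (fun ω' => ω'.2.1) u = pm μ U u) := by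
    intro ν hmarg
    have hYU : ∀ y u, pm ν (fun ω' => (ω'.2.2.1, ω'.2.1)) (y, u) = pm μ U u * R⁻¹ := by
      intro y u
      rw [← pm_marg (μ := ν) (fun ω' => (ω'.2.2.1, ω'.2.1)) (fun ω' => ω'.1) (y, u)]
      have h2 : ∀ x : Fin a, pm ν (fun ω' => ((ω'.2.2.1, ω'.2.1), ω'.1)) ((y, u), x)
          = pm ν (fun ω' => (ω'.1, ω'.2.1, ω'.2.2.1)) (x, u, y) :=
        fun x => pm_congr fun ω' _ => by simp only [Prod.mk.injEq]; tauto
      rw [Finset.sum_congr rfl fun x _ => (h2 x).trans (hmarg x u y)]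
      exact hsUY u y
    refine ⟨hYU, fun u => ?_⟩
    rw [← pm_marg (μ := ν) (fun ω' => ω'.2.1) (fun ω' => ω'.2.2.1) u]
    have h3 : ∀ y, pm ν (fun ω' => (ω'.2.1, ω'.2.2.1)) (u, y)
        = pm ν (fun ω' => (ω'.2.2.1, ω'.2.1)) (y, u) :=
      fun y => pm_congr fun ω' _ => by simp only [Prod.mk.injEq]; tauto
    rw [Finset.sum_congr rfl fun y _ => (h3 y).trans (hYU y u), Finset.sum_const,
      Finset.card_univ, nsmul_eq_mul, hcardYt]
    field_simp
  constructor
  · -- membership: the minimum is attained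
    simp only [Set.mem_setOf_eq]
    obtain ⟨z0v, hz0v⟩ : ∃ z : Fin (2^b), True := ⟨⟨0, by positivity⟩, trivial⟩
    set mask : 𝒰 → (Fin a → Fin (2^b)) → (Fin a → Fin (2^b)) :=
      fun u y x => if x ∈ Au u then y x else z0v with hmask
    have hmx : ∀ (u : 𝒰) (y : Fin a → Fin (2^b)), ∀ x ∈ Au u, mask u y x = y x := by
      intro u y x hx
      simp only [hmask]
      rw [if_pos hx]
    set Wset : 𝒰 → (Fin a → Fin (2^b)) → Finset (𝒰 × (Fin a → Fin (2^b))) :=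
      fun u y => Finset.univ.filter fun p => p.1 = u ∧ ∀ x ∈ Au u, p.2 x = y x with hWs
    have hWmem : ∀ u y (p : 𝒰 × (Fin a → Fin (2^b))),
        p ∈ Wset u y ↔ p.1 = u ∧ ∀ x ∈ Au u, p.2 x = y x := by
      intro u y p
      simp only [hWs, Finset.mem_filter, Finset.mem_univ, true_and]
    have hWself : ∀ u y, (u, y) ∈ Wset u y :=
      fun u y => (hWmem u y _).2 ⟨rfl, fun x _ => rfl⟩
    have hWindep : ∀ u y, IsIndepSet G (Wset u y) := by
      intro u y p hp q hq hadj
      obtain ⟨p1, p2⟩ := p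
      obtain ⟨q1, q2⟩ := q
      obtain ⟨hp1, hp2⟩ := (hWmem u y _).1 hp
      obtain ⟨hq1, hq2⟩ := (hWmem u y _).1 hq
      dsimp only at hp1 hp2 hq1 hq2
      rw [hG, charGraph_adj] at hadj
      obtain ⟨hne, ⟨k1, k2⟩, ⟨s11, s12⟩, ⟨s21, s22⟩, h1, h2, hf⟩ := hadj
      obtain ⟨ω₁, hω₁, he₁⟩ := exists_of_pm_ne_zero h1.ne'
      obtain ⟨ω₂, hω₂, he₂⟩ := exists_of_pm_ne_zero h2.ne'
      simp only [Prod.mk.injEq] at he₁ he₂ hf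
      obtain ⟨⟨hU1, hY1⟩, ⟨hX1, hU1'⟩, hs11, hs12⟩ := he₁
      obtain ⟨⟨hU2, hY2⟩, ⟨hX2, hU2'⟩, hs21, hs22⟩ := he₂
      have hAuk : k1 ∈ Au u := (hmemAu u k1).2 (pm_pos hμ0
        ⟨ω₁, hω₁, by show (U ω₁, X ω₁) = (u, k1); rw [hU1, hp1, hX1]⟩)
      have e11 : s11 = k1 := by rw [← hs11, hX1]
      have e21 : s21 = k1 := by rw [← hs21, hX2]
      have e12 : s12 = p2 := by rw [← hs12, hY1]
      have e22 : s22 = q2 := by rw [← hs22, hY2]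
      exact hf (by rw [e11, e21, e12, e22, hp2 k1 hAuk, hq2 k1 hAuk])
    set ν : Fin a × 𝒰 × (Fin a → Fin (2^b)) × Finset (𝒰 × (Fin a → Fin (2^b))) → ℝ :=
      fun ω' => if ω'.2.2.2 = Wset ω'.2.1 ω'.2.2.1
        then pm μ (fun ω => (X ω, U ω, Y ω)) (ω'.1, ω'.2.1, ω'.2.2.1) else 0 with hνdef
    have hν0 : ∀ ω', 0 ≤ ν ω' := by
      intro ω'
      simp only [hνdef]
      split
      · exact pm_nonneg hμ0 _ _
      · exact le_rfl
    have hνpos : ∀ x u y w, ν (x, u, y, w) ≠ 0 → w = Wset u y := by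
      intro x u y w h
      simp only [hνdef] at h
      by_contra hc
      exact h (if_neg hc)
    have hνval : ∀ x u y, ν (x, u, y, Wset u y) = pm μ (fun ω => (X ω, U ω, Y ω)) (x, u, y) := by
      intro x u y
      simp [hνdef]
    have hmarg : ∀ x u y, pm ν (fun ω' => (ω'.1, ω'.2.1, ω'.2.2.1)) (x, u, y)
        = pm μ (fun ω => (X ω, U ω, Y ω)) (x, u, y) := by
      intro x u y
      rw [pm_eq_single (μ := ν) (x, u, y, Wset u y) ?_ rfl, hνval]
      intro ω' hω'
      obtain ⟨x', u', y', w'⟩ := ω'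
      have hw' := hνpos x' u' y' w' hω'
      subst hw'
      simp only [Prod.mk.injEq]
      constructor
      · rintro ⟨rfl, rfl, rfl⟩
        exact ⟨rfl, rfl, rfl, rfl⟩
      · rintro ⟨rfl, rfl, rfl, -⟩
        exact ⟨rfl, rfl, rfl⟩
    obtain ⟨hYU', hU'⟩ := hcommon ν hmarg
    have hB : ∀ u y, pm ν (fun ω' => (ω'.2.1, ω'.2.2.1)) (u, y) = pm μ U u * R⁻¹ := by
      intro u y
      rw [← hYU' y u]
      exact pm_congr fun ω' _ => by simp only [Prod.mk.injEq]; tauto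
    have hνsum : ∑ ω', ν ω' = 1 := by
      have h1 : ∑ p : Fin a × 𝒰 × (Fin a → Fin (2^b)), pm μ (fun ω => (X ω, U ω, Y ω)) p
          = 1 := (sum_pm _).trans hμ1
      simp only [Fintype.sum_prod_type] at h1 ⊢
      have h2 : ∀ (x : Fin a) (u : 𝒰) (y : Fin a → Fin (2^b)),
          ∑ w : Finset (𝒰 × (Fin a → Fin (2^b))), ν (x, u, y, w)
            = pm μ (fun ω => (X ω, U ω, Y ω)) (x, u, y) := by
        intro x u y
        rw [Fintype.sum_eq_single (Wset u y) ?_, hνval]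
        intro w hw
        by_contra hc
        exact hw (hνpos x u y w hc)
      rw [Finset.sum_congr rfl fun x _ => Finset.sum_congr rfl fun u _ =>
        Finset.sum_congr rfl fun y _ => h2 x u y]
      exact h1
    have hmkv : CondIndepRV ν (fun ω' => ω'.1) (fun ω' => (ω'.2.1, ω'.2.2.1))
        (fun ω' => ω'.2.2.2) := by
      rintro x ⟨u, y⟩ w
      have T1 : pm ν (fun ω' => (ω'.1, (ω'.2.1, ω'.2.2.1), ω'.2.2.2)) (x, (u, y), w)
          = ν (x, u, y, w) := by
        rw [pm_eq_single (μ := ν) (x, u, y, w) ?_ rfl]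
        intro ω' _
        obtain ⟨x', u', y', w'⟩ := ω'
        simp only [Prod.mk.injEq]
        tauto
      have T6 : pm ν (fun ω' => (ω'.1, (ω'.2.1, ω'.2.2.1))) (x, (u, y))
          = pm μ (fun ω => (X ω, U ω, Y ω)) (x, u, y) := hmarg x u y
      have T4 : pm ν (fun ω' => ((ω'.2.1, ω'.2.2.1), ω'.2.2.2)) ((u, y), w)
          = if w = Wset u y then pm μ U u * R⁻¹ else 0 := by
        split_ifs with hw
        · subst hw
          rw [← hB u y]
          refine pm_congr fun ω' hω' => ?_
          obtain ⟨x', u', y', w'⟩ := ω'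
          have hw' := hνpos x' u' y' w' hω'
          subst hw'
          simp only [Prod.mk.injEq]
          constructor
          · rintro ⟨⟨rfl, rfl⟩, -⟩
            exact ⟨rfl, rfl⟩
          · rintro ⟨rfl, rfl⟩
            exact ⟨⟨rfl, rfl⟩, rfl⟩
        · refine pm_eq_zero_of fun ω' hω' hc => ?_
          obtain ⟨x', u', y', w'⟩ := ω'
          have hw' := hνpos x' u' y' w' hω'
          simp only [Prod.mk.injEq] at hc
          obtain ⟨⟨rfl, rfl⟩, rfl⟩ := hc
          exact hw hw'
      show pm ν (fun ω' => (ω'.1, (ω'.2.1, ω'.2.2.1), ω'.2.2.2)) (x, (u, y), w)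
          * pm ν (fun ω' => (ω'.2.1, ω'.2.2.1)) (u, y)
        = pm ν (fun ω' => (ω'.1, (ω'.2.1, ω'.2.2.1))) (x, (u, y))
          * pm ν (fun ω' => ((ω'.2.1, ω'.2.2.1), ω'.2.2.2)) ((u, y), w)
      rw [T1, T6, T4, hB u y]
      simp only [hνdef]
      split_ifs with h <;> ring
    have hsupp : ∀ ω', 0 < ν ω' → (ω'.2.1, ω'.2.2.1) ∈ ω'.2.2.2
        ∧ IsIndepSet G ω'.2.2.2 := by
      rintro ⟨x, u, y, w⟩ h
      have hw := hνpos x u y w h.ne'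
      subst hw
      exact ⟨hWself u y, hWindep u y⟩
    refine ⟨ν, ⟨hν0, hνsum⟩, hmarg, hmkv, hsupp, ?_⟩
    simp only [hgoalAu]
    -- compute the conditional mutual information
    have e1 : ent ν (fun ω' => (ω'.2.2.1, (ω'.2.2.2, ω'.2.1)))
        = ent ν (fun ω' => (ω'.2.2.1, ω'.2.1)) := by
      refine ent_two_sided
        (fun p : (Fin a → Fin (2^b)) × 𝒰 => (p.1, (Wset p.2 p.1, p.2)))
        (fun p : (Fin a → Fin (2^b)) × (Finset (𝒰 × (Fin a → Fin (2^b))) × 𝒰) => (p.1, p.2.2))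
        ?_ (fun ω' _ => rfl)
      rintro ⟨x, u, y, w⟩ hω'
      have hw := hνpos x u y w hω'
      subst hw
      rfl
    have hmm : ∀ u y, Wset u (mask u y) = Wset u y := by
      intro u y
      simp only [hWs]
      refine Finset.filter_congr fun p _ => ?_
      constructor
      · rintro ⟨h1, h2⟩
        exact ⟨h1, fun x hx => by rw [h2 x hx, hmx u y x hx]⟩
      · rintro ⟨h1, h2⟩
        exact ⟨h1, fun x hx => by rw [h2 x hx, hmx u y x hx]⟩
    set ext : Finset (𝒰 × (Fin a → Fin (2^b))) → 𝒰 → (Fin a → Fin (2^b)) :=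
      fun w u => if hne : (w.filter fun p => p.1 = u).Nonempty
        then mask u (Exists.choose hne).2 else mask u (fun _ => z0v) with hext
    have hextW : ∀ u y, ext (Wset u y) u = mask u y := by
      intro u y
      have hne : ((Wset u y).filter fun p => p.1 = u).Nonempty :=
        ⟨(u, y), Finset.mem_filter.2 ⟨hWself u y, rfl⟩⟩
      simp only [hext]
      rw [dif_pos hne]
      have hch := Exists.choose_spec hne
      rw [Finset.mem_filter] at hch
      obtain ⟨hch1, hch2⟩ := hch
      obtain ⟨-, hch3⟩ := (hWmem u y _).1 hch1
      funext x
      simp only [hmask]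
      by_cases hx : x ∈ Au u
      · rw [if_pos hx, if_pos hx, hch3 x hx]
      · rw [if_neg hx, if_neg hx]
    have e2 : ent ν (fun ω' => (ω'.2.2.2, ω'.2.1))
        = ent ν (fun ω' => (ω'.2.1, mask ω'.2.1 ω'.2.2.1)) := by
      refine ent_two_sided
        (fun p : 𝒰 × (Fin a → Fin (2^b)) => (Wset p.1 p.2, p.1))
        (fun p : Finset (𝒰 × (Fin a → Fin (2^b))) × 𝒰 => (p.2, ext p.1 p.2)) ?_ ?_
      · rintro ⟨x, u, y, w⟩ hω'
        have hw := hνpos x u y w hω'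
        subst hw
        show (Wset u y, u) = (Wset u (mask u y), u)
        rw [hmm u y]
      · rintro ⟨x, u, y, w⟩ hω'
        have hw := hνpos x u y w hω'
        subst hw
        show (u, ext (Wset u y) u) = (u, mask u y)
        rw [hextW u y]
    have hentU : ent ν (fun ω' => ω'.2.1) = ent μ U := by
      rw [ent_eq, ent_eq]
      exact Finset.sum_congr rfl fun u _ => by rw [hU' u]
    have hpmT : ∀ (u : 𝒰) (yt : Fin a → Fin (2^b)),
        pm ν (fun ω' => (ω'.2.1, mask ω'.2.1 ω'.2.2.1)) (u, yt)
          = ((Finset.univ.filter fun y : Fin a → Fin (2^b) => mask u y = yt).card : ℝ)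
              * (pm μ U u * R⁻¹) := by
      intro u yt
      rw [← pm_marg (μ := ν) (fun ω' => (ω'.2.1, mask ω'.2.1 ω'.2.2.1))
        (fun ω' => ω'.2.2.1) (u, yt)]
      have hterm : ∀ y : Fin a → Fin (2^b),
          pm ν (fun ω' => ((ω'.2.1, mask ω'.2.1 ω'.2.2.1), ω'.2.2.1)) ((u, yt), y)
            = if mask u y = yt then pm μ U u * R⁻¹ else 0 := by
        intro y
        split_ifs with hy
        · rw [← hB u y]
          refine pm_congr fun ω' _ => ?_
          obtain ⟨x', u', y', w'⟩ := ω'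
          simp only [Prod.mk.injEq]
          constructor
          · rintro ⟨⟨rfl, -⟩, rfl⟩
            exact ⟨rfl, rfl⟩
          · rintro ⟨rfl, rfl⟩
            exact ⟨⟨rfl, hy⟩, rfl⟩
        · refine pm_eq_zero_of fun ω' _ hc => ?_
          obtain ⟨x', u', y', w'⟩ := ω'
          simp only [Prod.mk.injEq] at hc
          obtain ⟨⟨rfl, hm⟩, rfl⟩ := hc
          exact hy hm
      rw [Finset.sum_congr rfl fun y _ => hterm y, ← Finset.sum_filter,
        Finset.sum_const, nsmul_eq_mul]
    have hcell : ∀ u : 𝒰, ∑ yt : Fin a → Fin (2^b),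
        F2 (pm ν (fun ω' => (ω'.2.1, mask ω'.2.1 ω'.2.2.1)) (u, yt))
          = F2 (pm μ U u) + pm μ U u * (((Au u).card : ℝ) * b) := by
      intro u
      have h2b : ((2:ℝ)^b) ≠ 0 := by positivity
      have hxk : (0:ℝ) < ((2:ℝ)^b)^((Au u).card) := by positivity
      set tm : Finset (Fin a → Fin (2^b)) :=
        Finset.univ.filter fun yt => ∀ x ∈ (Au u)ᶜ, yt x = (fun _ : Fin a => z0v) x with htm
      have hzero : ∀ yt ∉ tm, pm ν (fun ω' => (ω'.2.1, mask ω'.2.1 ω'.2.2.1)) (u, yt) = 0 := by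
        intro yt hyt
        simp only [htm, Finset.mem_filter, Finset.mem_univ, true_and, not_forall] at hyt
        obtain ⟨x, hx, hne⟩ := hyt
        rw [Finset.mem_compl] at hx
        rw [hpmT]
        have : (Finset.univ.filter fun y : Fin a → Fin (2^b) => mask u y = yt) = ∅ := by
          refine Finset.filter_false_of_mem fun y _ => ?_
          intro hc
          apply hne
          rw [← hc]
          simp only [hmask]
          rw [if_neg hx]
        rw [this]
        simp
      have hval : ∀ yt ∈ tm, pm ν (fun ω' => (ω'.2.1, mask ω'.2.1 ω'.2.2.1)) (u, yt)
          = pm μ U u * (((2:ℝ)^b)^((Au u).card))⁻¹ := by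
        intro yt hyt
        simp only [htm, Finset.mem_filter, Finset.mem_univ, true_and] at hyt
        rw [hpmT]
        have hfc : (Finset.univ.filter fun y : Fin a → Fin (2^b) => mask u y = yt)
            = Finset.univ.filter fun y : Fin a → Fin (2^b) => ∀ x ∈ Au u, y x = yt x := by
          refine Finset.filter_congr fun y _ => ?_
          constructor
          · intro h x hx
            rw [← h, hmx u y x hx]
          · intro h
            funext x
            by_cases hx : x ∈ Au u
            · rw [hmx u y x hx]
              exact h x hx
            · simp only [hmask]
              rw [if_neg hx, hyt x (Finset.mem_compl.2 hx)]
        rw [hfc, card_agree, Fintype.card_fin]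
        push_cast
        rw [pow_sub₀ _ h2b (kcard u), hR]
        push_cast
        field_simp
      have hcardtm : tm.card = (2^b)^((Au u).card) := by
        rw [htm, card_agree, Fintype.card_fin, Finset.card_compl, Fintype.card_fin,
          Nat.sub_sub_self (kcard u)]
      calc ∑ yt : Fin a → Fin (2^b),
            F2 (pm ν (fun ω' => (ω'.2.1, mask ω'.2.1 ω'.2.2.1)) (u, yt))
          = ∑ yt ∈ tm, F2 (pm ν (fun ω' => (ω'.2.1, mask ω'.2.1 ω'.2.2.1)) (u, yt)) :=
            (Finset.sum_subset (Finset.subset_univ tm)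
              (fun yt _ h => by rw [hzero yt h, F2_zero])).symm
        _ = ∑ yt ∈ tm, F2 (pm μ U u * (((2:ℝ)^b)^((Au u).card))⁻¹) :=
            Finset.sum_congr rfl fun yt h => by rw [hval yt h]
        _ = (tm.card : ℝ) * ((((2:ℝ)^b)^((Au u).card))⁻¹
              * (F2 (pm μ U u) + pm μ U u * Real.logb 2 (((2:ℝ)^b)^((Au u).card)))) := by
            rw [Finset.sum_const, nsmul_eq_mul, F2_mul_inv _ hxk]
        _ = F2 (pm μ U u) + pm μ U u * (((Au u).card : ℝ) * b) := by
            rw [hcardtm, Real.logb_pow]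
            have : Real.logb 2 ((2:ℝ)^b) = b := by
              rw [Real.logb_pow, Real.logb_self_eq_one (by norm_num), mul_one]
            rw [this]
            push_cast
            field_simp
    have hentT : ent ν (fun ω' => (ω'.2.1, mask ω'.2.1 ω'.2.2.1))
        = ent μ U + (b:ℝ) * ∑ u, ((Au u).card : ℝ) * pm μ U u := by
      rw [ent_eq]
      rw [Fintype.sum_prod_type]
      rw [Finset.sum_congr rfl fun u _ => hcell u, Finset.sum_add_distrib]
      rw [ent_eq (μ := μ) U]
      congr 1
      rw [Finset.mul_sum]
      exact Finset.sum_congr rfl fun u _ => by ring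
    simp only [condMI, condEnt]
    rw [e1, e2, hentT, hentU]
    ring
  · -- lower bound
    rintro r ⟨ν, ⟨hν0, hν1⟩, hmarg, hmkv, hsupp, rfl⟩
    obtain ⟨hYU', hU'⟩ := hcommon ν hmarg
    have hentU : ent ν (fun ω' => ω'.2.1) = ent μ U := by
      rw [ent_eq, ent_eq]
      exact Finset.sum_congr rfl fun u _ => by rw [hU' u]
    have hsumU' : ∑ u, pm ν (fun ω' => ω'.2.1) u = 1 := (sum_pm _).trans hν1
    -- H(Y|U) = a*b
    have hlogR : Real.logb 2 R = (a:ℝ) * b := by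
      rw [hR, Real.logb_pow, Real.logb_pow, Real.logb_self_eq_one (by norm_num)]
      ring
    have e1 : ent ν (fun ω' => (ω'.2.2.1, ω'.2.1))
        = ent ν (fun ω' => ω'.2.1) + Real.logb 2 R := by
      have := ent_pair_scaled (μ := ν) (fun ω' => ω'.2.2.1) (fun ω' => ω'.2.1)
        Fintype.card_pos hsumU' (fun p => by rw [hYU' p.1 p.2, hU' p.2, hcardYt])
      rw [this, hcardYt]
    -- bound on H(Y | W, U)
    set J : (Fin a → Fin (2^b)) → Finset (𝒰 × (Fin a → Fin (2^b))) → 𝒰 → ℝ :=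
      fun y w u => pm ν (fun ω' => (ω'.2.2.1, (ω'.2.2.2, ω'.2.1))) (y, (w, u)) with hJ
    set rwu : Finset (𝒰 × (Fin a → Fin (2^b))) → 𝒰 → ℝ :=
      fun w u => pm ν (fun ω' => (ω'.2.2.2, ω'.2.1)) (w, u) with hrwu
    have hJ0 : ∀ y w u, 0 ≤ J y w u := fun y w u => pm_nonneg hν0 _ _
    have hJr : ∀ w u, ∑ y, J y w u = rwu w u := by
      intro w u
      rw [hrwu]
      dsimp only
      rw [← pm_marg (μ := ν) (fun ω' => (ω'.2.2.2, ω'.2.1)) (fun ω' => ω'.2.2.1) (w, u)]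
      refine Finset.sum_congr rfl fun y _ => ?_
      rw [hJ]
      exact (pm_congr fun ω' _ => by simp only [Prod.mk.injEq]; tauto).symm
    have hJsupp : ∀ y w u, J y w u ≠ 0 → (u, y) ∈ w ∧ IsIndepSet G w := by
      intro y w u h
      rw [hJ] at h
      obtain ⟨ω', hω', he⟩ := exists_of_pm_ne_zero h
      obtain ⟨x', u', y', w'⟩ := ω'
      simp only [Prod.mk.injEq] at he
      obtain ⟨hy, hw, hu⟩ := he
      rw [← hu, ← hy, ← hw]
      exact hsupp (x', u', y', w') (lt_of_le_of_ne (hν0 _) (Ne.symm hω'))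
    have hper : ∀ w u, (∑ y, F2 (J y w u))
        ≤ F2 (rwu w u) + rwu w u * (((a - (Au u).card : ℕ) : ℝ) * b) := by
      intro w u
      by_cases hr0 : rwu w u = 0
      · have hall : ∀ y, J y w u = 0 := by
          intro y
          by_contra hy
          have hpos : 0 < rwu w u := by
            rw [← hJr w u]
            exact Finset.sum_pos' (fun y' _ => hJ0 y' w u)
              ⟨y, Finset.mem_univ y, lt_of_le_of_ne (hJ0 y w u) (Ne.symm hy)⟩
          exact hpos.ne' hr0
        simp [hall, hr0]
      · obtain ⟨y₀, -, hy₀⟩ := Finset.exists_ne_zero_of_sum_ne_zero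
          (by rw [hJr w u]; exact hr0)
        set t : Finset (Fin a → Fin (2^b)) :=
          Finset.univ.filter (fun y => ∀ x ∈ Au u, y x = y₀ x) with htdef
        have hwindep : IsIndepSet G w := (hJsupp _ _ _ hy₀).2
        have hy₀w : (u, y₀) ∈ w := (hJsupp _ _ _ hy₀).1
        have htmem : ∀ y, J y w u ≠ 0 → y ∈ t := by
          intro y hy
          rw [htdef]
          simp only [Finset.mem_filter, Finset.mem_univ, true_and]
          exact fun x hx => hagree w hwindep u y y₀ (hJsupp _ _ _ hy).1 hy₀w x hx
        have ht : t.Nonempty := ⟨y₀, htmem y₀ hy₀⟩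
        have hsub : ∀ y ∉ t, J y w u = 0 := by
          intro y hy
          by_contra h
          exact hy (htmem y h)
        have hts : ∑ y ∈ t, J y w u = rwu w u := by
          rw [← hJr w u]
          exact Finset.sum_subset (Finset.subset_univ t) fun y _ hy => hsub y hy
        have hcardt : t.card = (2^b) ^ (a - (Au u).card) := by
          rw [htdef, card_agree, Fintype.card_fin]
        calc ∑ y, F2 (J y w u) = ∑ y ∈ t, F2 (J y w u) :=
              (Finset.sum_subset (Finset.subset_univ t)
                fun y _ hy => by rw [hsub y hy, F2_zero]).symm
          _ ≤ F2 (∑ y ∈ t, J y w u) + (∑ y ∈ t, J y w u) * Real.logb 2 t.card :=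
              sum_F2_le ht fun y _ => hJ0 y w u
          _ = F2 (rwu w u) + rwu w u * (((a - (Au u).card : ℕ) : ℝ) * b) := by
              rw [hts, hcardt]
              congr 2
              push_cast
              rw [Real.logb_pow, Real.logb_pow, Real.logb_self_eq_one (by norm_num)]
              ring
    have hmargWU : ∀ u, ∑ w, rwu w u = pm μ U u := by
      intro u
      rw [← hU' u, ← pm_marg_fst (μ := ν) (fun ω' => ω'.2.2.2) (fun ω' => ω'.2.1) u]
    have hb1 : ent ν (fun ω' => (ω'.2.2.1, (ω'.2.2.2, ω'.2.1)))
          ≤ ent ν (fun ω' => (ω'.2.2.2, ω'.2.1))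
            + ∑ u, pm μ U u * (((a - (Au u).card : ℕ) : ℝ) * b) := by
        rw [ent_eq, ent_eq, Fintype.sum_prod_type, Finset.sum_comm]
        have hrhs : ∑ u, pm μ U u * (((a - (Au u).card : ℕ) : ℝ) * b)
            = ∑ q : Finset (𝒰 × (Fin a → Fin (2^b))) × 𝒰,
                rwu q.1 q.2 * (((a - (Au q.2).card : ℕ) : ℝ) * b) := by
          rw [Fintype.sum_prod_type, Finset.sum_comm]
          refine Finset.sum_congr rfl fun u _ => ?_
          dsimp only
          rw [← Finset.sum_mul, hmargWU u]
        rw [hrhs, ← Finset.sum_add_distrib]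
        refine Finset.sum_le_sum fun q _ => ?_
        exact hper q.1 q.2
    simp only [condMI, condEnt]
    rw [e1, hentU]
    have hfinal : ∑ u, pm μ U u * (((a - (Au u).card : ℕ) : ℝ) * b)
        = (a:ℝ) * b - (b:ℝ) * ∑ u, ((Au u).card : ℝ) * pm μ U u := by
      have hterm : ∀ u : 𝒰, pm μ U u * (((a - (Au u).card : ℕ) : ℝ) * b)
          = (a:ℝ) * b * pm μ U u - (b:ℝ) * (((Au u).card : ℝ) * pm μ U u) := by
        intro u
        rw [Nat.cast_sub (kcard u)]
        ring
      rw [Finset.sum_congr rfl fun u _ => hterm u, Finset.sum_sub_distrib,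
        ← Finset.mul_sum, ← Finset.mul_sum, hsumU, mul_one]
    simp only [hgoalAu]
    have h2 := hb1
    rw [hfinal] at h2
    rw [hlogR]
    linarith [h2]
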